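/- Serial Dictatorship produces a Pareto efficient feasible matching: fix an ordering s_1, …, s_n of the students; iteratively, having built feasible matching Y_{i-1}, let Y_i = Y_{i-1} ∪ {(s_i, p)} where p is s_i's most preferred acceptable project such that Y_{i-1} ∪ {(s_i, p)} is feasible under some allocation (and Y_i = Y_{i-1} if no such p exists). Then the final matching Y_n is feasible and Pareto efficient. -/
import Mathlib


open scoped Classical
open Finset

/-- A Student-Project-Resource (SPR) instance.  Students have strict preferences
over `Option P` (`none` = being unmatched, ∅), projects over `Option S`.
Each resource has a positive capacity and a set of compatible projects. -/
structure SPR (S P R : Type) [Fintype S] [Fintype R] where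
  prefS : S → Option P → Option P → Prop
  prefP : P → Option S → Option S → Prop
  q : R → ℕ
  qpos : ∀ r, 0 < q r
  T : R → Set P

namespace SPR

variable {S P R : Type} [Fintype S] [Fintype R] (I : SPR S P R)

/-- Project `p` is acceptable to student `s`. -/
def accS (s : S) (p : P) : Prop := I.prefS s (some p) none

/-- Student `s` is acceptable to project `p`. -/
def accP (p : P) (s : S) : Prop := I.prefP p (some s) none

/-- A matching assigns each student at most one project, acceptable to both. -/
def IsMatching (Y : S → Option P) : Prop :=
  ∀ s p, Y s = some p → I.accS s p ∧ I.accP p s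

/-- An allocation maps every resource to a compatible project. -/
def IsAlloc (μ : R → P) : Prop := ∀ r, μ r ∈ I.T r

/-- Total capacity provided to project `p` by allocation `μ`. -/
noncomputable def cap (μ : R → P) (p : P) : ℕ :=
  ∑ r ∈ univ.filter (fun r => μ r = p), I.q r

/-- Number of students matched to project `p` in matching `Y`. -/
noncomputable def assigned (Y : S → Option P) (p : P) : ℕ :=
  (univ.filter (fun s => Y s = some p)).card

/-- `(Y, μ)` is feasible. -/
def Feasible (Y : S → Option P) (μ : R → P) : Prop :=
  I.IsMatching Y ∧ I.IsAlloc μ ∧ ∀ p, SPR.assigned Y p ≤ I.cap μ p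

/-- `(s, p)` is a claiming pair of matching `Y`. -/
def ClaimingPair (Y : S → Option P) (s : S) (p : P) : Prop :=
  I.accP p s ∧ Y s ≠ some p ∧ I.prefS s (some p) (Y s) ∧
    ∃ μ', I.Feasible (Function.update Y s (some p)) μ'

/-- `(s, p)` is an envious pair of matching `Y`. -/
def EnviousPair (Y : S → Option P) (s : S) (p : P) : Prop :=
  I.accP p s ∧ Y s ≠ some p ∧ I.prefS s (some p) (Y s) ∧
    ∃ s', Y s' = some p ∧ I.prefP p (some s) (some s')

def Nonwasteful (Y : S → Option P) (μ : R → P) : Prop :=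
  I.Feasible Y μ ∧ ∀ s p, ¬ I.ClaimingPair Y s p

def Fair (Y : S → Option P) (μ : R → P) : Prop :=
  I.Feasible Y μ ∧ ∀ s p, ¬ I.EnviousPair Y s p

def Stable (Y : S → Option P) (μ : R → P) : Prop :=
  I.Nonwasteful Y μ ∧ I.Fair Y μ

/-- `Y'` Pareto dominates `Y` (students all weakly better, one strictly). -/
def ParetoDom (Y' Y : S → Option P) : Prop :=
  (∀ s, Y' s = Y s ∨ I.prefS s (Y' s) (Y s)) ∧ ∃ s, I.prefS s (Y' s) (Y s)

/-- `Y` is Pareto efficient among feasible matchings. -/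
def ParetoEfficient (Y : S → Option P) : Prop :=
  ∀ Y' μ', I.Feasible Y' μ' → ¬ I.ParetoDom Y' Y

end SPR

/-- One step of the Serial Dictatorship mechanism: student `s` is matched to her
most preferred acceptable project `p` such that adding `(s, p)` keeps the matching
feasible under some allocation; if no such project exists, the matching is unchanged. -/
def SDStep {S P R : Type} [Fintype S] [Fintype R] (I : SPR S P R)
    (s : S) (Y Y' : S → Option P) : Prop :=
  (∃ p : P, I.accS s p ∧ I.accP p s ∧
      Y' = Function.update Y s (some p) ∧ (∃ μ, I.Feasible Y' μ) ∧
      (∀ p' : P, I.accS s p' ∧ I.accP p' s ∧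
          (∃ μ, I.Feasible (Function.update Y s (some p')) μ) →
        p' = p ∨ I.prefS s (some p) (some p'))) ∨
  ((∀ p : P, I.accS s p ∧ I.accP p s →
      ¬ ∃ μ, I.Feasible (Function.update Y s (some p)) μ) ∧ Y' = Y)

/-- Serial Dictatorship produces a feasible and Pareto efficient
matching.  Students are processed in the order given by the enumeration `e`;
`Y 0` is the empty matching and each `Y i.succ` is obtained from `Y i.castSucc`
by the SD step for student `e i`. -/
theorem serial_dictatorship_pareto_efficient
    {S P R : Type} [Fintype S] [Fintype R] (I : SPR S P R)
    (hord : ∀ s : S, IsStrictTotalOrder (Option P) (I.prefS s))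
    (halloc : ∃ μ : R → P, I.IsAlloc μ)
    (n : ℕ) (e : Fin n ≃ S)
    (Y : Fin (n + 1) → S → Option P)
    (h0 : Y 0 = fun _ => none)
    (hstep : ∀ i : Fin n, SDStep I (e i) (Y i.castSucc) (Y i.succ)) :
    (∃ μ, I.Feasible (Y (Fin.last n)) μ) ∧ I.ParetoEfficient (Y (Fin.last n)) := by
  classical
  have asym : ∀ (s : S) (a b : Option P), I.prefS s a b → I.prefS s b a → False := by
    intro s a b h1 h2
    haveI := hord s
    exact irrefl_of (I.prefS s) a (trans_of (I.prefS s) h1 h2)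
  have key : ∀ m : ℕ, ∀ hm : m ≤ n,
      (∃ μ, I.Feasible (Y ⟨m, Nat.lt_succ_of_le hm⟩) μ) ∧
      (∀ j : Fin n, (j:ℕ) < m → Y ⟨m, Nat.lt_succ_of_le hm⟩ (e j) = Y j.succ (e j)) ∧
      (∀ s : S, (∀ j : Fin n, (j:ℕ) < m → s ≠ e j) →
        Y ⟨m, Nat.lt_succ_of_le hm⟩ s = none) := by
    intro m
    induction m with
    | zero =>
      intro hm
      have h00 : (⟨0, Nat.lt_succ_of_le hm⟩ : Fin (n+1)) = 0 := rfl
      rw [h00, h0]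
      obtain ⟨μ, hμ⟩ := halloc
      refine ⟨⟨μ, ?_, hμ, ?_⟩, ?_, ?_⟩
      · intro s p h; simp at h
      · intro p; simp [SPR.assigned]
      · intro j hj; omega
      · intro s _; rfl
    | succ m ih =>
      intro hm
      have hmn : m < n := hm
      have hm' : m ≤ n := le_of_lt hmn
      obtain ⟨⟨μc, hfc⟩, hpers, hnone⟩ := ih hm'
      set i : Fin n := ⟨m, hmn⟩ with hi
      have hcast : i.castSucc = (⟨m, Nat.lt_succ_of_le hm'⟩ : Fin (n+1)) := rfl
      have hsucc : i.succ = (⟨m+1, Nat.lt_succ_of_le hm⟩ : Fin (n+1)) := rfl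
      have hne : ∀ s, s ≠ e i → Y i.succ s = Y i.castSucc s := by
        rcases hstep i with ⟨p, _, _, heq, _, _⟩ | ⟨_, heq⟩
        · intro s hs; rw [heq, Function.update_of_ne hs]
        · intro s hs; rw [heq]
      have hfeas' : ∃ μ, I.Feasible (Y i.succ) μ := by
        rcases hstep i with ⟨p, _, _, heq, hf, _⟩ | ⟨_, heq⟩
        · exact hf
        · rw [heq]; exact ⟨μc, hfc⟩
      refine ⟨?_, ?_, ?_⟩
      · rw [← hsucc]; exact hfeas'
      · intro j hj
        rw [← hsucc]
        rcases Nat.lt_succ_iff_lt_or_eq.mp hj with hj' | hj'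
        · have hji : e j ≠ e i := by
            intro h
            have := congrArg Fin.val (e.injective h)
            simp [hi] at this; omega
          rw [hne (e j) hji, hcast, hpers j hj']
        · have hji : j = i := Fin.ext (by simpa [hi] using hj')
          rw [hji]
      · intro s hs
        have hsi : s ≠ e i := hs i (by simp [hi])
        rw [← hsucc, hne s hsi, hcast]
        exact hnone s (fun j hj => hs j (by omega))
  obtain ⟨⟨μn, hfn⟩, hpersn, hnonen⟩ := key n le_rfl
  have hlast : (Fin.last n) = (⟨n, Nat.lt_succ_of_le le_rfl⟩ : Fin (n+1)) := rfl
  constructor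
  · rw [hlast]; exact ⟨μn, hfn⟩
  · intro Y' μ' hf' hdom
    obtain ⟨hweak, s0, hs0⟩ := hdom
    set Yn := Y (Fin.last n) with hYn
    have hfnY : I.Feasible Yn μn := hfn
    have hdiff : ∀ s, I.prefS s (Y' s) (Yn s) → Y' s ≠ Yn s := by
      intro s h heq
      rw [heq] at h
      haveI := hord s
      exact irrefl_of (I.prefS s) _ h
    set D : Finset (Fin n) := univ.filter (fun i => Y' (e i) ≠ Yn (e i)) with hDdef
    have hD : D.Nonempty := by
      refine ⟨e.symm s0, ?_⟩
      simp only [hDdef, mem_filter, mem_univ, true_and, e.apply_symm_apply]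
      exact hdiff s0 hs0
    set i : Fin n := D.min' hD with hidef
    have hiD : Y' (e i) ≠ Yn (e i) := by
      have := D.min'_mem hD
      simp only [hDdef, mem_filter, mem_univ, true_and] at this
      exact this
    have hmin : ∀ j : Fin n, (j:ℕ) < (i:ℕ) → Y' (e j) = Yn (e j) := by
      intro j hj
      by_contra h
      have hle : i ≤ j := D.min'_le j (by simp only [hDdef, mem_filter, mem_univ, true_and]; exact h)
      rw [Fin.le_def] at hle; omega
    have hstricti : I.prefS (e i) (Y' (e i)) (Yn (e i)) := by
      rcases hweak (e i) with h | h
      · exact absurd h hiD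
      · exact h
    obtain ⟨p', hp'⟩ : ∃ p', Y' (e i) = some p' := by
      cases hY' : Y' (e i) with
      | some p' => exact ⟨p', rfl⟩
      | none =>
        exfalso
        cases hYne : Yn (e i) with
        | none => exact hiD (hY'.trans hYne.symm)
        | some p =>
          have hacc : I.accS (e i) p := (hfnY.1 (e i) p hYne).1
          rw [hY', hYne] at hstricti
          exact asym (e i) _ _ hstricti hacc
    have hin : (i:ℕ) ≤ n := le_of_lt i.isLt
    obtain ⟨⟨μi, hfi⟩, hpersi, hnonei⟩ := key (i:ℕ) hin
    have hci : i.castSucc = (⟨(i:ℕ), Nat.lt_succ_of_le hin⟩ : Fin (n+1)) := rfl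
    have hearly : ∀ j : Fin n, (j:ℕ) < (i:ℕ) → Y i.castSucc (e j) = Y' (e j) := by
      intro j hj
      rw [hci, hpersi j hj, ← hpersn j j.isLt]
      exact (hmin j hj).symm
    set Z := Function.update (Y i.castSucc) (e i) (some p') with hZ
    have hZfeas : I.Feasible Z μ' := by
      obtain ⟨hM', hA', hC'⟩ := hf'
      refine ⟨?_, hA', ?_⟩
      · intro s p h
        by_cases hsi : s = e i
        · subst hsi
          rw [hZ, Function.update_self] at h
          obtain rfl := Option.some.inj h
          exact hM' _ p' hp'
        · rw [hZ, Function.update_of_ne hsi] at h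
          exact hfi.1 s p h
      · intro p
        have hsub : univ.filter (fun s => Z s = some p) ⊆
            univ.filter (fun s => Y' s = some p) := by
          intro s hs
          simp only [mem_filter, mem_univ, true_and] at hs ⊢
          by_cases hsi : s = e i
          · subst hsi
            rw [hZ, Function.update_self] at hs
            rw [hp']; exact hs
          · rw [hZ, Function.update_of_ne hsi] at hs
            have hex : ∃ j : Fin n, (j:ℕ) < (i:ℕ) ∧ s = e j := by
              by_contra hcon
              push_neg at hcon
              have hnn := hnonei s (fun j hj => hcon j hj)
              rw [← hci] at hnn
              rw [hnn] at hs
              simp at hs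
            obtain ⟨j, hj, rfl⟩ := hex
            rw [← hearly j hj]; exact hs
        calc SPR.assigned Z p ≤ SPR.assigned Y' p := Finset.card_le_card hsub
        _ ≤ I.cap μ' p := hC' p
    have haccS' : I.accS (e i) p' := (hf'.1 (e i) p' hp').1
    have haccP' : I.accP p' (e i) := (hf'.1 (e i) p' hp').2
    rcases hstep i with ⟨p, hpS, hpP, heq, hpf, hmax⟩ | ⟨hnon, heq⟩
    · have hYni : Yn (e i) = some p := by
        have h1 : Yn (e i) = Y i.succ (e i) := hpersn i i.isLt
        rw [h1, heq, Function.update_self]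
      rcases hmax p' ⟨haccS', haccP', ⟨μ', hZfeas⟩⟩ with rfl | hpref
      · exact hiD (hp'.trans hYni.symm)
      · rw [hp', hYni] at hstricti
        exact asym (e i) _ _ hstricti hpref
    · exact hnon p' ⟨haccS', haccP'⟩ ⟨μ', hZfeas⟩
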